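/- Let χ₀, χ ∈ ℂ with Re χ₀ < 0, and set b := (χ − χ₀)/(2·Re χ₀), κ₀ := exp(χ₀), κ := exp(χ). Define φ : ℂ → ℂ by φ(0) := 0 and φ(z) := z · exp(2b·log|z|) for z ≠ 0 (where log|z| is the real logarithm of the modulus). Then for every z ∈ ℂ and every u ∈ ℂ with |u| = 1, one has φ(κ₀·u·z) = κ·u·φ(z). -/

import Mathlib

/-- The generalized radial stretching `φ(z) = z·e^{2b log|z|}` with
`b = (χ − χ₀)/(2 Re χ₀)` conjugates multiplication by `κ₀·u = e^{χ₀}·u` to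
multiplication by `κ·u = e^{χ}·u`, for any unimodular `u`. -/
theorem radial_stretch_conjugacy (χ₀ χ : ℂ) (h0 : χ₀.re < 0)
    (b : ℂ) (hb : b = (χ - χ₀) / (2 * (χ₀.re : ℂ)))
    (φ : ℂ → ℂ) (hφ0 : φ 0 = 0)
    (hφ : ∀ z : ℂ, z ≠ 0 →
      φ z = z * Complex.exp (2 * b * (Real.log ‖z‖ : ℂ))) :
    ∀ z u : ℂ, ‖u‖ = 1 →
      φ (Complex.exp χ₀ * u * z) = Complex.exp χ * u * φ z := by
  intro z u hu
  have hu0 : u ≠ 0 := by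
    intro h; simp [h] at hu
  rcases eq_or_ne z 0 with rfl | hz
  · simp [hφ0]
  · have hw : Complex.exp χ₀ * u * z ≠ 0 := by
      exact mul_ne_zero (mul_ne_zero (Complex.exp_ne_zero _) hu0) hz
    rw [hφ _ hw, hφ _ hz]
    have habs : ‖Complex.exp χ₀ * u * z‖
        = Real.exp χ₀.re * ‖z‖ := by
      simp [map_mul, Complex.norm_exp, hu]
    have hlog : Real.log (‖Complex.exp χ₀ * u * z‖)
        = χ₀.re + Real.log ‖z‖ := by
      rw [habs, Real.log_mul (Real.exp_ne_zero _)
        (by simpa using (norm_ne_zero_iff.mpr hz)), Real.log_exp]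
    have hre : (χ₀.re : ℂ) ≠ 0 := by
      exact_mod_cast ne_of_lt h0
    have hkey : 2 * b * (χ₀.re : ℂ) = χ - χ₀ := by
      rw [hb]; field_simp
    rw [hlog]
    push_cast
    rw [mul_add, Complex.exp_add, hkey]
    have : Complex.exp (χ - χ₀) * Complex.exp χ₀ = Complex.exp χ := by
      rw [← Complex.exp_add]; ring_nf
    calc Complex.exp χ₀ * u * z * (Complex.exp (χ - χ₀) *
          Complex.exp (2 * b * (Real.log ‖z‖ : ℂ)))
        = (Complex.exp (χ - χ₀) * Complex.exp χ₀) * u *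
          (z * Complex.exp (2 * b * (Real.log ‖z‖ : ℂ))) := by ring
      _ = Complex.exp χ * u * (z * Complex.exp (2 * b * (Real.log ‖z‖ : ℂ))) := by
          rw [this]
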